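/- (Convergence condition for the contour expansion of the Ising model.) Let d ≥ 1, J > 0, β > 0 and let Λ ⊂ ℤ^d be finite. For finite nonempty connected (nearest-neighbor) sets S ⊂ ℤ^d, let ∂_e S := {{x,x'} : |x−x'| = 1, x ∈ S, x' ∉ S}, w(S) := exp(−2βJ|∂_e S|), [S]_1 := {x ∈ ℤ^d : dist(x,S) ≤ 1}, and for two such sets let f̂(S,S') := −1 if dist(S,S') ≤ 1 and f̂(S,S') := 0 otherwise; set z_h := e^{2βh}. If h ≤ h_IS := −(1/(2β))(2d + 1 + 2·log(2d) + log 2), then for every finite nonempty connected S* ⊂ Λ, Σ_{S ⊂ Λ, S connected, S ≠ ∅} w(S) z_h^{|S|} |f̂(S,S*)| e^{|[S]_1|} ≤ |[S*]_1|. -/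

import Mathlib

open scoped BigOperators Classical

noncomputable section
namespace IsingCE

/-- squared Euclidean norm on `ℤ^d`; it equals `1` exactly at nearest neighbors. -/
def sqnorm {d : ℕ} (x : Fin d → ℤ) : ℤ := ∑ i, (x i)^2

/-- the nearest neighbor of `x` in direction `i`, forwards (`b = true`) or backwards. -/
def nbr {d : ℕ} (x : Fin d → ℤ) (i : Fin d) (b : Bool) : Fin d → ℤ :=
  fun j => x j + (if j = i then (if b then 1 else -1) else 0)

lemma sqnorm_neg {d : ℕ} (x : Fin d → ℤ) : sqnorm (-x) = sqnorm x := by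
  unfold sqnorm; simp

lemma sqnorm_sub_comm {d : ℕ} (x y : Fin d → ℤ) : sqnorm (x - y) = sqnorm (y - x) := by
  rw [← sqnorm_neg (x - y), neg_sub]

/-- the (2d) nearest neighbors of `x`. -/
def nbrFinset {d : ℕ} (x : Fin d → ℤ) : Finset (Fin d → ℤ) :=
  Finset.image (fun p : Fin d × Bool => nbr x p.1 p.2) Finset.univ

/-- nearest-neighbor graph on the points of `S`. -/
def nnGraph {d : ℕ} (S : Finset (Fin d → ℤ)) : SimpleGraph {x // x ∈ S} where
  Adj a b := sqnorm (a.1 - b.1) = 1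
  symm := by
    constructor
    intro a b hab
    rw [sqnorm_sub_comm]; exact hab
  loopless := by
    constructor
    intro a ha
    simp [sqnorm] at ha

/-- `S` is a connected subset of `ℤ^d`: any two of its points are joined by a
path in `S` whose consecutive points are at Euclidean distance `1`. -/
def FinsetConn {d : ℕ} (S : Finset (Fin d → ℤ)) : Prop := (nnGraph S).Connected

/-- `|∂_e S|`: the number of nearest-neighbor edges `{x,x'}` with `x ∈ S`, `x' ∉ S`. -/
noncomputable def edgeBoundaryCard {d : ℕ} (S : Finset (Fin d → ℤ)) : ℕ :=
  ∑ x ∈ S, ((nbrFinset x).filter (fun y => y ∉ S)).card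

/-- `[S]_1`: the set of lattice points at Euclidean distance at most `1` from `S`. -/
noncomputable def closure1 {d : ℕ} (S : Finset (Fin d → ℤ)) : Finset (Fin d → ℤ) :=
  S ∪ S.biUnion nbrFinset

/-- `f̂(S,S') = -1` if `dist(S,S') ≤ 1`, and `0` otherwise. -/
noncomputable def fhat {d : ℕ} (S S' : Finset (Fin d → ℤ)) : ℝ :=
  if (S ∩ closure1 S').Nonempty then -1 else 0

/-- contour weight `w(S) = exp(-2βJ|∂_e S|)`. -/
noncomputable def contourW (d : ℕ) (β J : ℝ) (S : Finset (Fin d → ℤ)) : ℝ :=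
  Real.exp (-2*β*J * (edgeBoundaryCard S : ℝ))


lemma nbr_cancel {d : ℕ} (x : Fin d → ℤ) (i : Fin d) (b : Bool) :
    nbr (nbr x i b) i (!b) = x := by
  funext j
  simp only [nbr]
  by_cases hj : j = i <;> cases b <;> simp [hj]

lemma sqnorm_nbr_sub {d : ℕ} (x : Fin d → ℤ) (i : Fin d) (b : Bool) :
    sqnorm (nbr x i b - x) = 1 := by
  unfold sqnorm nbr
  have h : ∀ j : Fin d, ((x j + (if j = i then (if b then 1 else -1) else 0)) - x j)^2
      = if j = i then 1 else 0 := by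
    intro j; by_cases hj : j = i <;> cases b <;> simp [hj]
  simp only [Pi.sub_apply, h]
  simp

lemma one_le_sq {a : ℤ} (h : a ≠ 0) : 1 ≤ a^2 := by
  have : a ≤ -1 ∨ 1 ≤ a := by omega
  rcases this with h1 | h1 <;> nlinarith

lemma exists_nbr_of_sqnorm_one {d : ℕ} {u v : Fin d → ℤ} (h : sqnorm (v - u) = 1) :
    ∃ i b, v = nbr u i b := by
  unfold sqnorm at h
  by_cases hall : ∀ j, v j - u j = 0
  · exfalso
    have h0 : ∑ i, ((v - u) i)^2 = 0 := by
      apply Finset.sum_eq_zero; intro j _; simp [hall j]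
    omega
  push_neg at hall
  obtain ⟨j, hj⟩ := hall
  have hjne : (v - u) j ≠ 0 := by simpa using hj
  have h1 : (1:ℤ) ≤ ((v - u) j)^2 := one_le_sq hjne
  have hle : ((v - u) j)^2 ≤ ∑ i, ((v - u) i)^2 :=
    Finset.single_le_sum (f := fun i => ((v - u) i)^2)
      (fun i _ => sq_nonneg _) (Finset.mem_univ j)
  have hsq : ((v - u) j)^2 = 1 := by omega
  have hrest : ∀ k, k ≠ j → (v - u) k = 0 := by
    intro k hk
    by_contra hk0
    have h1k : (1:ℤ) ≤ ((v - u) k)^2 := one_le_sq hk0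
    have hsplit : ((v - u) j)^2 + ∑ i ∈ Finset.univ.erase j, ((v - u) i)^2
        = ∑ i, ((v - u) i)^2 :=
      Finset.add_sum_erase Finset.univ (fun i => ((v - u) i)^2) (Finset.mem_univ j)
    have hk' : k ∈ Finset.univ.erase j := Finset.mem_erase.mpr ⟨hk, Finset.mem_univ k⟩
    have h2 : ((v - u) k)^2 ≤ ∑ i ∈ Finset.univ.erase j, ((v - u) i)^2 :=
      Finset.single_le_sum (f := fun i => ((v - u) i)^2) (fun i _ => sq_nonneg _) hk'
    omega
  have hpm : (v - u) j = 1 ∨ (v - u) j = -1 := by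
    have hz : ((v - u) j - 1) * ((v - u) j + 1) = 0 := by nlinarith
    rcases mul_eq_zero.mp hz with hz | hz
    · left; linarith
    · right; linarith
  rcases hpm with hp | hp
  · refine ⟨j, true, ?_⟩
    funext k
    simp only [nbr]
    by_cases hk : k = j
    · subst hk
      simp only [Pi.sub_apply] at hp
      simp; omega
    · have h0 := hrest k hk
      simp only [Pi.sub_apply] at h0
      simp [hk]; omega
  · refine ⟨j, false, ?_⟩
    funext k
    simp only [nbr]
    by_cases hk : k = j
    · subst hk
      simp only [Pi.sub_apply] at hp
      simp; omega
    · have h0 := hrest k hk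
      simp only [Pi.sub_apply] at h0
      simp [hk]; omega
/-! ### Walks encoded as step lists -/

def endPt {d : ℕ} (x : Fin d → ℤ) : List (Fin d × Bool) → (Fin d → ℤ)
  | [] => x
  | s :: l => endPt (nbr x s.1 s.2) l

def walkPts {d : ℕ} (x : Fin d → ℤ) : List (Fin d × Bool) → Finset (Fin d → ℤ)
  | [] => {x}
  | s :: l => insert x (walkPts (nbr x s.1 s.2) l)

lemma mem_walkPts_self {d : ℕ} (x : Fin d → ℤ) (l : List (Fin d × Bool)) :
    x ∈ walkPts x l := by
  cases l <;> simp [walkPts]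

lemma walkPts_append {d : ℕ} (x : Fin d → ℤ) (l1 l2 : List (Fin d × Bool)) :
    walkPts x (l1 ++ l2) = walkPts x l1 ∪ walkPts (endPt x l1) l2 := by
  induction l1 generalizing x with
  | nil =>
    simp only [List.nil_append, walkPts, endPt]
    exact (Finset.union_eq_right.mpr (by simp [mem_walkPts_self])).symm
  | cons s l ih =>
    simp only [List.cons_append, walkPts, endPt, ih, Finset.insert_union, List.append_eq]

lemma exists_split_of_mem_walkPts {d : ℕ} {x y : Fin d → ℤ} {l : List (Fin d × Bool)}
    (h : y ∈ walkPts x l) : ∃ l1 l2, l = l1 ++ l2 ∧ endPt x l1 = y := by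
  induction l generalizing x with
  | nil =>
    simp [walkPts] at h
    exact ⟨[], [], by simp, by simp [endPt, h.symm]⟩
  | cons s l ih =>
    simp only [walkPts, Finset.mem_insert] at h
    rcases h with h | h
    · exact ⟨[], s :: l, by simp, by simp [endPt, h.symm]⟩
    · obtain ⟨l1, l2, hl, he⟩ := ih h
      exact ⟨s :: l1, l2, by simp [hl], by simp [endPt, he]⟩

/-- splicing a detour to a new neighbor `v` into a covering walk -/
lemma splice {d : ℕ} {x u v : Fin d → ℤ} {T : Finset (Fin d → ℤ)}
    {l : List (Fin d × Bool)} (hl : walkPts x l = T) (hu : u ∈ T)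
    {i : Fin d} {b : Bool} (hv : v = nbr u i b) :
    ∃ l' : List (Fin d × Bool), l'.length = l.length + 2 ∧ walkPts x l' = insert v T := by
  obtain ⟨l1, l2, hsplit, hend⟩ := exists_split_of_mem_walkPts (hl ▸ hu)
  refine ⟨l1 ++ (i, b) :: (i, !b) :: l2, by simp [hsplit]; omega, ?_⟩
  rw [walkPts_append, hend]
  have h2 : walkPts u ((i, b) :: (i, !b) :: l2)
      = insert u (insert v (walkPts u l2)) := by
    simp only [walkPts, hv, nbr_cancel]
  rw [h2, ← hl, hsplit, walkPts_append, hend]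
  have hmem : u ∈ walkPts u l2 := mem_walkPts_self _ _
  ext y
  simp only [Finset.mem_union, Finset.mem_insert]
  constructor
  · rintro (h | h | h | h) <;> simp_all
  · rintro (h | h | h) <;> simp_all

/-! ### Reachability within a finite set -/

inductive Reach {d : ℕ} (S : Finset (Fin d → ℤ)) : (Fin d → ℤ) → (Fin d → ℤ) → Prop
  | refl (x : Fin d → ℤ) (hx : x ∈ S) : Reach S x x
  | tail {x y z : Fin d → ℤ} (h : Reach S x y) (hz : z ∈ S) (hyz : sqnorm (y - z) = 1) :
      Reach S x z

lemma Reach.head {d : ℕ} {S : Finset (Fin d → ℤ)} {a b c : Fin d → ℤ}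
    (ha : a ∈ S) (hab : sqnorm (a - b) = 1) (h : Reach S b c) : Reach S a c := by
  induction h with
  | refl hx => exact Reach.tail (Reach.refl a ha) hx hab
  | tail h hz hyz ih => exact Reach.tail ih hz hyz

lemma reach_of_walk {d : ℕ} {S : Finset (Fin d → ℤ)} :
    ∀ {a b : {x // x ∈ S}}, (nnGraph S).Walk a b → Reach S a.1 b.1 := by
  intro a b w
  induction w with
  | nil => exact Reach.refl _ (Subtype.mem _)
  | @cons u v w hadj p ih => exact Reach.head (Subtype.mem u) hadj ih

lemma Reach.mem_right {d : ℕ} {S : Finset (Fin d → ℤ)} {a b : Fin d → ℤ}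
    (h : Reach S a b) : b ∈ S := by
  induction h with
  | refl hx => exact hx
  | tail h hz hyz ih => exact hz

/-- crossing lemma -/
lemma reach_crossing {d : ℕ} {S T : Finset (Fin d → ℤ)} {a z : Fin d → ℤ}
    (h : Reach S a z) (ha : a ∈ T) (hz : z ∉ T) :
    ∃ u v, u ∈ T ∧ v ∈ S ∧ v ∉ T ∧ sqnorm (v - u) = 1 := by
  induction h with
  | refl hx => exact absurd ha hz
  | @tail y z h hzS hyz ih =>
    by_cases hyT : y ∈ T
    · exact ⟨y, z, hyT, hzS, hz, by rw [sqnorm_sub_comm]; exact hyz⟩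
    · exact ih hyT

lemma finsetConn_reach {d : ℕ} {S : Finset (Fin d → ℤ)} (hS : FinsetConn S)
    {x y : Fin d → ℤ} (hx : x ∈ S) (hy : y ∈ S) : Reach S x y := by
  obtain ⟨w⟩ := hS.preconnected ⟨x, hx⟩ ⟨y, hy⟩
  exact reach_of_walk w

lemma exists_cover_walk_aux {d : ℕ} {S : Finset (Fin d → ℤ)} (hconn : FinsetConn S)
    {x : Fin d → ℤ} (hx : x ∈ S) :
    ∀ k (T : Finset (Fin d → ℤ)), T ⊆ S → x ∈ T → (S \ T).card = k →
      (∃ l : List (Fin d × Bool), l.length = 2*(T.card - 1) ∧ walkPts x l = T) →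
      ∃ l : List (Fin d × Bool), l.length = 2*(S.card - 1) ∧ walkPts x l = S := by
  intro k
  induction k using Nat.strong_induction_on with
  | _ k ih =>
    intro T hTS hxT hcard hl
    rcases Nat.eq_zero_or_pos k with hk | hk
    · have : S = T := by
        have h0 : S \ T = ∅ := Finset.card_eq_zero.mp (hk ▸ hcard)
        exact Finset.Subset.antisymm (fun y hy => by
          by_contra hyT
          exact absurd (Finset.mem_sdiff.mpr ⟨hy, hyT⟩) (h0 ▸ Finset.notMem_empty y)) hTS
      exact this ▸ hl
    · obtain ⟨y, hy⟩ := Finset.card_pos.mp (hcard ▸ hk)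
      obtain ⟨hyS, hyT⟩ := Finset.mem_sdiff.mp hy
      obtain ⟨u, v, huT, hvS, hvT, hadj⟩ :=
        reach_crossing (finsetConn_reach hconn (hTS hxT) hyS) hxT hyT
      obtain ⟨i, b, hv⟩ := exists_nbr_of_sqnorm_one hadj
      obtain ⟨l, hlen, hwalk⟩ := hl
      obtain ⟨l', hlen', hwalk'⟩ := splice hwalk huT hv
      have hT1 : T.card ≠ 0 := Finset.card_ne_zero_of_mem hxT
      have hcard' : (insert v T).card = T.card + 1 := Finset.card_insert_of_notMem hvT
      have hsd : (S \ insert v T).card = k - 1 := by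
        rw [Finset.sdiff_insert]
        rw [Finset.card_erase_of_mem (Finset.mem_sdiff.mpr ⟨hvS, hvT⟩), hcard]
      exact ih (k - 1) (by omega) (insert v T)
        (Finset.insert_subset hvS hTS) (Finset.mem_insert_of_mem hxT) hsd
        ⟨l', by rw [hlen', hlen, hcard']; omega, hwalk'⟩

lemma exists_cover_walk {d : ℕ} {S : Finset (Fin d → ℤ)} (hconn : FinsetConn S)
    {x : Fin d → ℤ} (hx : x ∈ S) :
    ∃ l : List (Fin d × Bool), l.length = 2*(S.card - 1) ∧ walkPts x l = S :=
  exists_cover_walk_aux hconn hx (S \ {x}).card {x} (by simpa using hx) (by simp) rfl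
    ⟨[], by simp [walkPts], by simp [walkPts]⟩
lemma closure1_card_le {d : ℕ} (S : Finset (Fin d → ℤ)) :
    (closure1 S).card ≤ (2*d+1) * S.card := by
  have h1 : (closure1 S).card ≤ S.card + (S.biUnion nbrFinset).card :=
    Finset.card_union_le _ _
  have h2 : (S.biUnion nbrFinset).card ≤ ∑ x ∈ S, (nbrFinset x).card :=
    Finset.card_biUnion_le
  have h3 : ∀ x : Fin d → ℤ, (nbrFinset x).card ≤ 2*d := by
    intro x
    calc (nbrFinset x).card ≤ (Finset.univ : Finset (Fin d × Bool)).card :=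
          Finset.card_image_le
      _ = 2*d := by simp [Finset.card_univ]; ring
  have h4 : ∑ x ∈ S, (nbrFinset x).card ≤ ∑ x ∈ S, 2*d :=
    Finset.sum_le_sum (fun x _ => h3 x)
  simp only [Finset.sum_const, smul_eq_mul] at h4
  calc (closure1 S).card ≤ S.card + S.card * (2*d) := by omega
    _ = (2*d+1) * S.card := by ring

/-- classical choice of a covering walk -/
noncomputable def coverList {d : ℕ} (x : Fin d → ℤ) (S : Finset (Fin d → ℤ)) :
    List (Fin d × Bool) :=
  if h : FinsetConn S ∧ x ∈ S then (exists_cover_walk h.1 h.2).choose else []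

lemma coverList_spec {d : ℕ} {x : Fin d → ℤ} {S : Finset (Fin d → ℤ)}
    (h1 : FinsetConn S) (h2 : x ∈ S) :
    (coverList x S).length = 2*(S.card - 1) ∧ walkPts x (coverList x S) = S := by
  rw [coverList, dif_pos ⟨h1, h2⟩]
  exact (exists_cover_walk h1 h2).choose_spec

/-- encoding of a connected set of size `n` containing `x` by a covering walk -/
noncomputable def encode {d : ℕ} (hd : 1 ≤ d) (x : Fin d → ℤ) (n : ℕ)
    (S : Finset (Fin d → ℤ)) : List.Vector (Fin d × Bool) (2*(n-1)) :=
  if h : FinsetConn S ∧ x ∈ S ∧ S.card = n then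
    ⟨coverList x S, by rw [(coverList_spec h.1 h.2.1).1, h.2.2]⟩
  else ⟨List.replicate (2*(n-1)) (⟨0, hd⟩, true), by simp⟩

lemma encode_inj {d n : ℕ} (hd : 1 ≤ d) (x : Fin d → ℤ) {S1 S2 : Finset (Fin d → ℤ)}
    (h1 : FinsetConn S1 ∧ x ∈ S1 ∧ S1.card = n)
    (h2 : FinsetConn S2 ∧ x ∈ S2 ∧ S2.card = n)
    (heq : encode hd x n S1 = encode hd x n S2) : S1 = S2 := by
  have e1 : encode hd x n S1 =
      ⟨coverList x S1, by rw [(coverList_spec h1.1 h1.2.1).1, h1.2.2]⟩ := dif_pos h1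
  have e2 : encode hd x n S2 =
      ⟨coverList x S2, by rw [(coverList_spec h2.1 h2.2.1).1, h2.2.2]⟩ := dif_pos h2
  have hl : coverList x S1 = coverList x S2 :=
    congrArg List.Vector.toList (e1.symm.trans (heq.trans e2))
  calc S1 = walkPts x (coverList x S1) := (coverList_spec h1.1 h1.2.1).2.symm
    _ = walkPts x (coverList x S2) := by rw [hl]
    _ = S2 := (coverList_spec h2.1 h2.2.1).2

/-- counting lemma: at most `(2d)^(2(n-1))` connected sets of size `n` contain `x`. -/
lemma card_conn_le {d n : ℕ} (hd : 1 ≤ d) (x : Fin d → ℤ)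
    (G : Finset (Finset (Fin d → ℤ)))
    (hG : ∀ S ∈ G, x ∈ S ∧ FinsetConn S ∧ S.card = n) :
    G.card ≤ (2*d)^(2*(n-1)) := by
  classical
  have hcard : G.card ≤ (Finset.univ : Finset (List.Vector (Fin d × Bool) (2*(n-1)))).card := by
    apply Finset.card_le_card_of_injOn (encode hd x n)
    · intro S _; exact Finset.mem_univ _
    · intro S1 hS1 S2 hS2 heq
      obtain ⟨ha1, hb1, hc1⟩ := hG S1 hS1
      obtain ⟨ha2, hb2, hc2⟩ := hG S2 hS2
      exact encode_inj hd x ⟨hb1, ha1, hc1⟩ ⟨hb2, ha2, hc2⟩ heq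
  calc G.card ≤ (Finset.univ : Finset (List.Vector (Fin d × Bool) (2*(n-1)))).card := hcard
    _ = (2*d)^(2*(n-1)) := by
        rw [Finset.card_univ, card_vector]
        congr 1
        simp [Fintype.card_prod]
        ring

lemma geom_aux : ∀ M : ℕ, ∑ n ∈ Finset.Icc 1 M, ((1:ℝ)/2)^n = 1 - (1/2)^M := by
  intro M
  induction M with
  | zero => simp
  | succ M ih =>
    rw [Finset.sum_Icc_succ_top (by omega), ih, pow_succ]
    ring

/-- convergence condition for the contour expansion: if
`h ≤ h_IS = -(1/(2β))(2d + 1 + 2 log(2d) + log 2)`, then for every finite nonempty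
connected `S* ⊆ Λ`,
`Σ_{S ⊆ Λ connected nonempty} w(S) z_h^{|S|} |f̂(S,S*)| e^{|[S]_1|} ≤ |[S*]_1|`. -/
theorem contour_expansion_convergence_condition
    (d : ℕ) (hd : 1 ≤ d) (J β : ℝ) (hJ : 0 < J) (hβ : 0 < β)
    (Λ : Finset (Fin d → ℤ)) (h : ℝ)
    (hh : h ≤ -(1/(2*β)) * (2*(d : ℝ) + 1 + 2*Real.log (2*(d : ℝ)) + Real.log 2))
    (Sstar : Finset (Fin d → ℤ)) (hS1 : Sstar ⊆ Λ) (hS2 : Sstar.Nonempty)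
    (hS3 : FinsetConn Sstar) :
    ∑ S ∈ Λ.powerset.filter (fun S => S.Nonempty ∧ FinsetConn S),
        contourW d β J S * Real.exp (2*β*h) ^ S.card * |fhat S Sstar| *
          Real.exp (((closure1 S).card : ℝ)) ≤
      ((closure1 Sstar).card : ℝ) := by
  classical
  set F := Λ.powerset.filter (fun S => S.Nonempty ∧ FinsetConn S) with hF
  set c : ℝ := 2*(d:ℝ) with hc
  have hc2 : (2:ℝ) ≤ c := by
    rw [hc]
    have : (1:ℝ) ≤ (d:ℝ) := by exact_mod_cast hd
    linarith
  have hcpos : (0:ℝ) < c := lt_of_lt_of_le two_pos hc2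
  set L : ℝ := Real.log (2*c^2) with hL
  set q : ℝ := (2*c^2)⁻¹ with hq
  have h2c2 : (0:ℝ) < 2*c^2 := by positivity
  have hqpos : (0:ℝ) < q := by rw [hq]; positivity
  have hexpL : Real.exp (-L) = q := by
    rw [hL, Real.exp_neg, Real.exp_log h2c2, hq]
  have hKey : 2*β*h + (2*(d:ℝ)+1) ≤ -L := by
    have hβ2 : (0:ℝ) < 2*β := by linarith
    have h1 : 2*β*h ≤ -(2*(d:ℝ) + 1 + 2*Real.log (2*(d:ℝ)) + Real.log 2) := by
      have h2 := mul_le_mul_of_nonneg_left hh (le_of_lt hβ2)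
      calc 2*β*h = (2*β)*h := by ring
        _ ≤ (2*β) * (-(1/(2*β)) * (2*(d:ℝ) + 1 + 2*Real.log (2*(d:ℝ)) + Real.log 2)) := h2
        _ = -(2*(d:ℝ) + 1 + 2*Real.log (2*(d:ℝ)) + Real.log 2) := by
            field_simp
    have hLe : L = Real.log 2 + 2*Real.log (2*(d:ℝ)) := by
      rw [hL, Real.log_mul two_ne_zero (by positivity), Real.log_pow, hc]
      push_cast; ring
    rw [hLe]; linarith
  -- per-term bound
  have hterm : ∀ S ∈ F,
      contourW d β J S * Real.exp (2*β*h) ^ S.card * |fhat S Sstar| *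
        Real.exp (((closure1 S).card : ℝ)) ≤
      (if (S ∩ closure1 Sstar).Nonempty then q^S.card else 0) := by
    intro S _
    by_cases ht : (S ∩ closure1 Sstar).Nonempty
    · rw [if_pos ht]
      have hfh : |fhat S Sstar| = 1 := by rw [fhat, if_pos ht]; norm_num
      have hw : contourW d β J S ≤ 1 := by
        rw [contourW, Real.exp_le_one_iff]
        have h0 : (0:ℝ) ≤ (edgeBoundaryCard S : ℝ) := Nat.cast_nonneg _
        nlinarith [mul_nonneg (mul_nonneg (le_of_lt hβ) (le_of_lt hJ)) h0]
      have hcl : ((closure1 S).card : ℝ) ≤ (2*(d:ℝ)+1) * S.card := by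
        have hb := closure1_card_le S
        have hb' : ((closure1 S).card : ℝ) ≤ (((2*d+1) * S.card : ℕ) : ℝ) :=
          Nat.cast_le.mpr hb
        push_cast at hb'
        linarith
      have hmain : Real.exp (2*β*h) ^ S.card * Real.exp (((closure1 S).card:ℝ))
          ≤ q ^ S.card := by
        rw [← Real.exp_nat_mul, ← Real.exp_add, ← hexpL, ← Real.exp_nat_mul]
        apply Real.exp_le_exp.mpr
        have hn0 : (0:ℝ) ≤ (S.card:ℝ) := Nat.cast_nonneg _
        calc (S.card:ℝ)*(2*β*h) + ((closure1 S).card:ℝ)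
            ≤ (S.card:ℝ)*(2*β*h) + (2*(d:ℝ)+1)*S.card := by linarith
          _ = (S.card:ℝ) * (2*β*h + (2*(d:ℝ)+1)) := by ring
          _ ≤ (S.card:ℝ) * (-L) := mul_le_mul_of_nonneg_left hKey hn0
      calc contourW d β J S * Real.exp (2*β*h) ^ S.card * |fhat S Sstar| *
            Real.exp (((closure1 S).card : ℝ))
          = contourW d β J S *
            (Real.exp (2*β*h) ^ S.card * Real.exp (((closure1 S).card : ℝ))) := by
            rw [hfh]; ring
        _ ≤ 1 * (q ^ S.card) :=
            mul_le_mul hw hmain (by positivity) one_pos.le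
        _ = q ^ S.card := one_mul _
    · rw [if_neg ht]
      have h0 : fhat S Sstar = 0 := by rw [fhat, if_neg ht]
      rw [h0]; simp
  refine le_trans (Finset.sum_le_sum hterm) ?_
  rw [← Finset.sum_filter]
  set F' := F.filter (fun S => (S ∩ closure1 Sstar).Nonempty) with hF'
  set ptf : Finset (Fin d → ℤ) → (Fin d → ℤ) :=
    fun S => if h : (S ∩ closure1 Sstar).Nonempty then h.choose else (fun _ => 0) with hptf
  have hpt : ∀ S ∈ F', ptf S ∈ S ∩ closure1 Sstar := by
    intro S hS
    have ht : (S ∩ closure1 Sstar).Nonempty := (Finset.mem_filter.mp hS).2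
    rw [hptf]; simp only [dif_pos ht]
    exact ht.choose_spec
  have hmaps : ∀ S ∈ F', ptf S ∈ closure1 Sstar := by
    intro S hS; exact (Finset.mem_inter.mp (hpt S hS)).2
  rw [← Finset.sum_fiberwise_of_maps_to hmaps (fun S => q^S.card)]
  have hx1 : ∀ x ∈ closure1 Sstar,
      ∑ S ∈ F'.filter (fun S => ptf S = x), q^S.card ≤ 1 := by
    intro x hx
    set Fx := F'.filter (fun S => ptf S = x) with hFx
    have hFxprop : ∀ S ∈ Fx, x ∈ S ∧ FinsetConn S ∧ 1 ≤ S.card ∧ S.card ≤ Λ.card := by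
      intro S hS
      obtain ⟨hS', hxS⟩ := Finset.mem_filter.mp hS
      obtain ⟨hSF, _⟩ := Finset.mem_filter.mp hS'
      obtain ⟨h1, hSne, hSconn⟩ := Finset.mem_filter.mp hSF
      have hSΛ := Finset.mem_powerset.mp h1
      refine ⟨?_, hSconn, Finset.card_pos.mpr hSne, Finset.card_le_card hSΛ⟩
      have := hpt S hS'
      rw [hxS] at this
      exact (Finset.mem_inter.mp this).1
    have hmaps2 : ∀ S ∈ Fx, S.card ∈ Finset.Icc 1 Λ.card := by
      intro S hS
      obtain ⟨_, _, h1, h2⟩ := hFxprop S hS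
      exact Finset.mem_Icc.mpr ⟨h1, h2⟩
    rw [← Finset.sum_fiberwise_of_maps_to hmaps2 (fun S => q^S.card)]
    have hinner : ∀ n ∈ Finset.Icc 1 Λ.card,
        ∑ S ∈ Fx.filter (fun S => S.card = n), q^S.card ≤ ((1:ℝ)/2)^n := by
      intro n hn
      obtain ⟨hn1, _⟩ := Finset.mem_Icc.mp hn
      have hsum : ∑ S ∈ Fx.filter (fun S => S.card = n), q^S.card
          = ((Fx.filter (fun S => S.card = n)).card : ℝ) * q^n := by
        rw [Finset.sum_congr rfl (fun S hS => by
          rw [(Finset.mem_filter.mp hS).2])]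
        rw [Finset.sum_const, nsmul_eq_mul]
      rw [hsum]
      have hcount : ((Fx.filter (fun S => S.card = n)).card : ℝ) ≤ c^(2*(n-1)) := by
        have := card_conn_le hd x (Fx.filter (fun S => S.card = n)) (by
          intro S hS
          obtain ⟨hS1', hS2'⟩ := Finset.mem_filter.mp hS
          obtain ⟨hxS, hconn, _, _⟩ := hFxprop S hS1'
          exact ⟨hxS, hconn, hS2'⟩)
        have h2 : (((Fx.filter (fun S => S.card = n)).card : ℕ) : ℝ)
            ≤ (((2*d)^(2*(n-1)) : ℕ) : ℝ) := Nat.cast_le.mpr this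
        push_cast at h2
        rw [hc]
        exact h2
      have hpow : c^(2*(n-1)) * q^n ≤ ((1:ℝ)/2)^n := by
        obtain ⟨m, rfl⟩ : ∃ m, n = m + 1 := ⟨n - 1, by omega⟩
        have hs : 2*(m+1-1) = 2*m := by omega
        rw [hs, hq, inv_pow, ← one_div ((2*c^2)^(m+1)), mul_one_div,
          div_le_iff₀ (by positivity)]
        have hmp : ((1:ℝ)/2) * (2*c^2) = c^2 := by ring
        rw [← mul_pow, hmp]
        calc c^(2*m) ≤ c^(2*(m+1)) :=
              pow_le_pow_right₀ (one_le_two.trans hc2) (by omega)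
          _ = (c^2)^(m+1) := by rw [← pow_mul, mul_comm 2 (m+1)]
      calc ((Fx.filter (fun S => S.card = n)).card : ℝ) * q^n
          ≤ c^(2*(n-1)) * q^n :=
            mul_le_mul_of_nonneg_right hcount (by positivity)
        _ ≤ ((1:ℝ)/2)^n := hpow
    calc ∑ n ∈ Finset.Icc 1 Λ.card, ∑ S ∈ Fx.filter (fun S => S.card = n), q^S.card
        ≤ ∑ n ∈ Finset.Icc 1 Λ.card, ((1:ℝ)/2)^n := Finset.sum_le_sum hinner
      _ = 1 - (1/2)^Λ.card := geom_aux _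
      _ ≤ 1 := by
          have : (0:ℝ) ≤ (1/2)^Λ.card := by positivity
          linarith
  calc ∑ x ∈ closure1 Sstar, ∑ S ∈ F'.filter (fun S => ptf S = x), q^S.card
      ≤ ∑ x ∈ closure1 Sstar, (1:ℝ) := Finset.sum_le_sum hx1
    _ = ((closure1 Sstar).card : ℝ) := by simp


end IsingCE
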